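/- The (α,β)-generating function of non-ambiguous trees satisfies the differential equation GFN(x,y;α,β) = (1 + α ∫_0^x GFN(u,y;α,1) du) · (1 + β ∫_0^y GFN(x,v;1,β) dv), as an identity of formal power series. -/

import Mathlib

/-- Binary trees: `leaf` is the empty tree, `node l r` is a vertex with
left subtree `l` and right subtree `r`. -/
inductive BT : Type
  | leaf : BT
  | node : BT → BT → BT
  deriving DecidableEq

namespace BT

/-- The positions (vertices) of a binary tree, encoded as the lists of directions
(`false` = left, `true` = right) from the root. -/
def positions : BT → Finset (List Bool)
  | leaf => ∅
  | node l r =>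
      insert [] ((l.positions.image (List.cons false)) ∪ (r.positions.image (List.cons true)))

/-- Positions of the left children of a binary tree. -/
def leftPos (B : BT) : Finset (List Bool) := B.positions.filter (fun p => p.getLast? = some false)

/-- Positions of the right children of a binary tree. -/
def rightPos (B : BT) : Finset (List Bool) := B.positions.filter (fun p => p.getLast? = some true)

/-- The subtree rooted at a given position (the empty tree for invalid positions). -/
def subtreeAt : BT → List Bool → BT
  | t, [] => t
  | leaf, _ :: _ => leaf
  | node l r, b :: p => (if b then r else l).subtreeAt p

end BT

/-- A non-ambiguous tree of shape `B`: a labelling of the left (resp. right) children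
of `B` by `0, …, |LV(B)|-1` (resp. `0, …, |RV(B)|-1`), bijectively, such that the label
of a strict ancestor is strictly greater than the label of a descendant (among left
children, resp. among right children).  A vertex `p` is a strict ancestor of `q`
exactly when `p` is a proper prefix of `q`. -/
structure NAT (B : BT) where
  labL : {p : List Bool // p ∈ B.leftPos} → Fin B.leftPos.card
  labR : {p : List Bool // p ∈ B.rightPos} → Fin B.rightPos.card
  bijL : Function.Bijective labL
  bijR : Function.Bijective labR
  ancL : ∀ p q : {p : List Bool // p ∈ B.leftPos}, p.1 <+: q.1 → p.1 ≠ q.1 → labL q < labL p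
  ancR : ∀ p q : {p : List Bool // p ∈ B.rightPos}, p.1 <+: q.1 → p.1 ≠ q.1 → labR q < labR p

instance (B : BT) : Finite (NAT B) := by
  have h : Function.Injective (fun T : NAT B => (T.labL, T.labR)) := by
    intro T₁ T₂ h
    cases T₁
    cases T₂
    simp only [Prod.mk.injEq] at h
    obtain ⟨h1, h2⟩ := h
    subst h1
    subst h2
    rfl
  exact Finite.of_injective _ h

noncomputable instance (B : BT) : Fintype (NAT B) := Fintype.ofFinite _
namespace BT

/-- Number of vertices on the leftmost branch of a binary tree (root included). -/
def ldepth : BT → ℕ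
  | leaf => 0
  | node l _ => l.ldepth + 1

/-- Number of vertices on the rightmost branch of a binary tree (root included). -/
def rdepth : BT → ℕ
  | leaf => 0
  | node _ r => r.rdepth + 1

/-- `LO`: the number of non-root vertices on the leftmost branch. -/
def lo (B : BT) : ℕ := B.ldepth - 1

/-- `RO`: the number of non-root vertices on the rightmost branch. -/
def ro (B : BT) : ℕ := B.rdepth - 1

end BT

/-- The coefficient ring `ℚ[α,β]`, with `α = X 0` and `β = X 1`. -/
abbrev Rab := MvPolynomial (Fin 2) ℚ

/-- The `(α,β)`-generating function of nonempty non-ambiguous trees, at given values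
`a`, `b` of the parameters `α`, `β`: the coefficient of `x^i y^j` is
`(1/(i!j!)) ∑_T a^{LO(T)} b^{RO(T)}`, the sum ranging over nonempty NATs `T` with
`|LV(T)| = i` and `|RV(T)| = j`. -/
noncomputable def GFNab (a b : Rab) : MvPowerSeries (Fin 2) Rab := fun d =>
  ((((d 0).factorial : ℚ) * ((d 1).factorial : ℚ))⁻¹) •
    ∑ᶠ T : {T : Σ B : BT, NAT B //
        T.1 ≠ BT.leaf ∧ T.1.leftPos.card = d 0 ∧ T.1.rightPos.card = d 1},
      a ^ T.1.1.lo * b ^ T.1.1.ro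

/-- Formal integral `∫_0^x f(u,y) du` on `ℚ[α,β][[x,y]]`. -/
noncomputable def iX (f : MvPowerSeries (Fin 2) Rab) : MvPowerSeries (Fin 2) Rab :=
  fun d => if d 0 = 0 then 0 else ((d 0 : ℚ))⁻¹ • f (d - Finsupp.single 0 1)

/-- Formal integral `∫_0^y f(x,v) dv` on `ℚ[α,β][[x,y]]`. -/
noncomputable def iY (f : MvPowerSeries (Fin 2) Rab) : MvPowerSeries (Fin 2) Rab :=
  fun d => if d 1 = 0 then 0 else ((d 1 : ℚ))⁻¹ • f (d - Finsupp.single 1 1)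


section Machinery
open Finset


open Finset

/-- strict prefix -/
def SP (p q : List Bool) : Prop := p <+: q ∧ p ≠ q

lemma sp_antisymm {p q : List Bool} (h1 : p <+: q) (h2 : q <+: p) : p = q :=
  h1.eq_of_length (le_antisymm h1.length_le h2.length_le)

/-- descending bijective labellings of a finset of positions -/
def Desc (S : Finset (List Bool)) : Type :=
  {f : {p : List Bool // p ∈ S} ≃ Fin S.card // ∀ p q, SP p.1 q.1 → f q < f p}

noncomputable instance (S : Finset (List Bool)) : Fintype (Desc S) := by
  unfold Desc; exact Fintype.ofFinite _

lemma card_desc_empty : Nat.card (Desc (∅ : Finset (List Bool))) = 1 := by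
  haveI he : IsEmpty {p : List Bool // p ∈ (∅ : Finset (List Bool))} :=
    ⟨fun p => (Finset.notMem_empty _ p.2)⟩
  haveI : IsEmpty (Fin (#(∅ : Finset (List Bool)))) := by
    rw [Finset.card_empty]; infer_instance
  have d : Desc (∅ : Finset (List Bool)) :=
    ⟨Equiv.equivOfIsEmpty _ _, fun p _ _ => isEmptyElim p⟩
  haveI : Subsingleton (Desc (∅ : Finset (List Bool))) :=
    ⟨fun a b => Subtype.ext (Equiv.ext fun p => isEmptyElim p)⟩
  haveI := uniqueOfSubsingleton d
  exact Nat.card_unique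

lemma card_desc_congr (S S' : Finset (List Bool)) (e : {p : List Bool // p ∈ S} ≃ {p : List Bool // p ∈ S'})
    (he : ∀ p q, SP (e p).1 (e q).1 ↔ SP p.1 q.1) :
    Nat.card (Desc S) = Nat.card (Desc S') := by
  have hcard : S.card = S'.card := by
    rw [← Fintype.card_coe, ← Fintype.card_coe]
    exact Fintype.card_congr e
  refine Nat.card_congr (Equiv.subtypeEquiv (Equiv.equivCongr e (finCongr hcard)) ?_)
  intro f
  have hE : ∀ x, (Equiv.equivCongr e (finCongr hcard) f) x = finCongr hcard (f (e.symm x)) :=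
    fun x => rfl
  constructor
  · intro hf p q hpq
    have h1 : SP (e (e.symm p)).1 (e (e.symm q)).1 := by
      rw [e.apply_symm_apply, e.apply_symm_apply]; exact hpq
    have := hf _ _ ((he _ _).1 h1)
    rw [hE, hE, Fin.lt_def]
    simp only [finCongr_apply, Fin.coe_cast]
    exact this
  · intro hf p q hpq
    have h2 := hf (e p) (e q) ((he p q).2 hpq)
    rw [hE, hE, Fin.lt_def] at h2
    simp only [finCongr_apply, Fin.coe_cast, Equiv.symm_apply_apply] at h2
    exact h2

lemma card_desc_image (b : Bool) (S : Finset (List Bool)) :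
    Nat.card (Desc (S.image (List.cons b))) = Nat.card (Desc S) := by
  refine (card_desc_congr _ _ ?_ ?_).symm
  · refine ⟨fun p => ⟨b :: p.1, mem_image_of_mem _ p.2⟩,
      fun q => ⟨q.1.tail, ?_⟩, fun p => rfl, fun q => Subtype.ext ?_⟩
    · obtain ⟨r, hr, hrq⟩ := mem_image.1 q.2
      rw [← hrq]; simpa
    · show b :: (q.1).tail = q.1
      obtain ⟨r, hr, hrq⟩ := mem_image.1 q.2
      rw [← hrq]
      rfl
  · intro p q
    show SP (b :: p.1) (b :: q.1) ↔ SP p.1 q.1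
    unfold SP
    simp [List.cons_prefix_cons]

lemma card_desc_top (S : Finset (List Bool)) (t : List Bool) (ht : t ∈ S)
    (htop : ∀ p ∈ S, p ≠ t → SP t p) :
    Nat.card (Desc S) = Nat.card (Desc (S.erase t)) := by
  set n := S.card with hn
  set m := (S.erase t).card with hm'
  have hm : m + 1 = n := Finset.card_erase_add_one ht
  have hmax : ∀ (f : Desc S) (p : {p : List Bool // p ∈ S}), p.1 ≠ t →
      f.1 p < f.1 ⟨t, ht⟩ := fun f p hp => f.2 ⟨t, ht⟩ p (htop p.1 p.2 hp)
  have hval : ∀ f : Desc S, (f.1 ⟨t, ht⟩).val = m := by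
    intro f
    have h1 : ∀ k : Fin n, k ≤ f.1 ⟨t, ht⟩ := by
      intro k
      obtain ⟨q, rfl⟩ := f.1.surjective k
      by_cases hq : q.1 = t
      · exact le_of_eq (congrArg f.1 (Subtype.ext hq))
      · exact le_of_lt (hmax f q hq)
    have h2 := (f.1 ⟨t, ht⟩).isLt
    have h3 := h1 ⟨m, by omega⟩
    rw [Fin.le_def] at h3
    simp only at h3
    omega
  have memS : ∀ p : {p : List Bool // p ∈ S.erase t}, p.1 ∈ S :=
    fun p => Finset.mem_of_mem_erase p.2
  -- forward
  have hlt : ∀ (f : Desc S) (p : {p : List Bool // p ∈ S.erase t}),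
      (f.1 ⟨p.1, memS p⟩).val < m := by
    intro f p
    have h1 := hmax f ⟨p.1, memS p⟩ (Finset.ne_of_mem_erase p.2)
    have h2 := hval f
    rw [Fin.lt_def] at h1
    omega
  have hbijF : ∀ f : Desc S, Function.Bijective
      (fun p : {p : List Bool // p ∈ S.erase t} =>
        (⟨(f.1 ⟨p.1, memS p⟩).val, hlt f p⟩ : Fin m)) := by
    intro f
    refine (Fintype.bijective_iff_injective_and_card _).2 ⟨?_, by simp [Fintype.card_coe, hm']⟩
    intro p q h
    simp only [Fin.mk.injEq] at h
    have h2 := f.1.injective (Fin.ext h)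
    have h3 : p.1 = q.1 := congrArg (fun x : {p : List Bool // p ∈ S} => x.1) h2
    exact Subtype.ext h3
  let Φ : Desc S → Desc (S.erase t) := fun f =>
    ⟨Equiv.ofBijective _ (hbijF f), by
      intro p q hpq
      have := f.2 ⟨p.1, memS p⟩ ⟨q.1, memS q⟩ hpq
      rw [Fin.lt_def] at this ⊢
      exact this⟩
  have hΦ : Function.Injective Φ := by
    intro f f' h
    refine Subtype.ext (Equiv.ext fun p => ?_)
    by_cases hp : p.1 = t
    · have hpt : p = ⟨t, ht⟩ := Subtype.ext hp
      subst hpt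
      exact Fin.ext ((hval f).trans (hval f').symm)
    · have hpe : p.1 ∈ S.erase t := Finset.mem_erase.2 ⟨hp, p.2⟩
      have h2 := congrArg (fun g => ((g.1 ⟨p.1, hpe⟩ : Fin m)).val) h
      exact Fin.ext h2
  -- backward
  have hf0 : ∀ (p : {p : List Bool // p ∈ S}), p.1 ≠ t → p.1 ∈ S.erase t :=
    fun p hp => Finset.mem_erase.2 ⟨hp, p.2⟩
  have hbijG : ∀ g : Desc (S.erase t), Function.Bijective
      (fun p : {p : List Bool // p ∈ S} =>
        if h : p.1 = t then (⟨m, by omega⟩ : Fin n)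
        else ⟨(g.1 ⟨p.1, hf0 p h⟩).val, by have := (g.1 ⟨p.1, hf0 p h⟩).isLt; omega⟩) := by
    intro g
    refine (Fintype.bijective_iff_injective_and_card _).2 ⟨?_, by simp [Fintype.card_coe, hn]⟩
    intro p q h
    simp only at h
    by_cases hp : p.1 = t <;> by_cases hq : q.1 = t
    · exact Subtype.ext (hp.trans hq.symm)
    · exfalso
      rw [dif_pos hp, dif_neg hq] at h
      have h2 := congrArg Fin.val h
      simp only at h2
      have := (g.1 ⟨q.1, hf0 q hq⟩).isLt
      omega
    · exfalso
      rw [dif_neg hp, dif_pos hq] at h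
      have h2 := congrArg Fin.val h
      simp only at h2
      have := (g.1 ⟨p.1, hf0 p hp⟩).isLt
      omega
    · rw [dif_neg hp, dif_neg hq] at h
      have h2 := congrArg Fin.val h
      simp only at h2
      have h3 := g.1.injective (Fin.ext h2)
      have h4 : p.1 = q.1 := congrArg (fun x : {p : List Bool // p ∈ S.erase t} => x.1) h3
      exact Subtype.ext h4
  let Ψ : Desc (S.erase t) → Desc S := fun g =>
    ⟨Equiv.ofBijective _ (hbijG g), by
      intro p q hpq
      have hq : q.1 ≠ t := by
        intro h
        have h1 := htop p.1 p.2 (h ▸ hpq.2)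
        exact (h ▸ hpq.2) (sp_antisymm h1.1 (h ▸ hpq.1)).symm
      simp only [Equiv.ofBijective_apply]
      by_cases hp : p.1 = t
      · rw [dif_pos hp, dif_neg hq, Fin.lt_def]
        exact (g.1 ⟨q.1, hf0 q hq⟩).isLt
      · have := g.2 ⟨p.1, hf0 p hp⟩ ⟨q.1, hf0 q hq⟩ hpq
        rw [Fin.lt_def] at this
        rw [dif_neg hp, dif_neg hq, Fin.lt_def]
        exact this⟩
  have hΨ : Function.Injective Ψ := by
    intro g g' h
    refine Subtype.ext (Equiv.ext fun p => ?_)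
    have hp : p.1 ≠ t := Finset.ne_of_mem_erase p.2
    have h2 := congrArg (fun f => ((f.1 ⟨p.1, Finset.mem_of_mem_erase p.2⟩ : Fin n)).val) h
    simp only [Ψ, Equiv.ofBijective_apply, dif_neg hp] at h2
    exact Fin.ext h2
  exact le_antisymm (Nat.card_le_card_of_injective Φ hΦ)
    (Nat.card_le_card_of_injective Ψ hΨ)

lemma card_desc_union (S1 S2 : Finset (List Bool)) (hdisj : Disjoint S1 S2)
    (hcross : ∀ p ∈ S1, ∀ q ∈ S2, ¬ p <+: q ∧ ¬ q <+: p) :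
    Nat.card (Desc (S1 ∪ S2)) =
      (S1.card + S2.card).choose S1.card * (Nat.card (Desc S1) * Nat.card (Desc S2)) := by
  classical
  have hn : (S1 ∪ S2).card = S1.card + S2.card := Finset.card_union_of_disjoint hdisj
  have mem1 : ∀ p ∈ S1, p ∈ S1 ∪ S2 := fun p hp => Finset.mem_union_left _ hp
  have mem2 : ∀ p ∈ S2, p ∈ S1 ∪ S2 := fun p hp => Finset.mem_union_right _ hp
  have hcompl : ∀ (A : Finset (Fin (S1 ∪ S2).card)), A.card = S1.card →
      Aᶜ.card = S2.card := by
    intro A hA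
    rw [Finset.card_compl, hA, Fintype.card_fin, hn]
    omega
  have hnotS1 : ∀ p : {p : List Bool // p ∈ S1 ∪ S2}, p.1 ∉ S1 → p.1 ∈ S2 :=
    fun p h => (Finset.mem_union.1 p.2).resolve_left h
  -- the underlying function of the inverse map
  let mk : ∀ (A : Finset (Fin (S1 ∪ S2).card)), A.card = S1.card → Desc S1 → Desc S2 →
      {p : List Bool // p ∈ S1 ∪ S2} → Fin (S1 ∪ S2).card := fun A hA g1 g2 p =>
    if h : p.1 ∈ S1 then ((A.orderIsoOfFin hA) (g1.1 ⟨p.1, h⟩) : {x // x ∈ A}).1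
    else ((Aᶜ.orderIsoOfFin (hcompl A hA)) (g2.1 ⟨p.1, hnotS1 p h⟩) : {x // x ∈ Aᶜ}).1
  have hmkinj : ∀ A hA g1 g2, Function.Injective (mk A hA g1 g2) := by
    intro A hA g1 g2 p q h
    simp only [mk] at h
    by_cases hp : p.1 ∈ S1 <;> by_cases hq : q.1 ∈ S1
    · rw [dif_pos hp, dif_pos hq] at h
      have h2 := (A.orderIsoOfFin hA).injective (Subtype.ext h)
      have h3 := g1.1.injective h2
      exact Subtype.ext (congrArg (fun x : {p : List Bool // p ∈ S1} => x.1) h3)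
    · exfalso
      rw [dif_pos hp, dif_neg hq] at h
      have h1 := ((A.orderIsoOfFin hA) (g1.1 ⟨p.1, hp⟩)).2
      have h2 := ((Aᶜ.orderIsoOfFin (hcompl A hA)) (g2.1 ⟨q.1, hnotS1 q hq⟩)).2
      rw [h] at h1
      exact (Finset.mem_compl.1 h2) h1
    · exfalso
      rw [dif_neg hp, dif_pos hq] at h
      have h1 := ((A.orderIsoOfFin hA) (g1.1 ⟨q.1, hq⟩)).2
      have h2 := ((Aᶜ.orderIsoOfFin (hcompl A hA)) (g2.1 ⟨p.1, hnotS1 p hp⟩)).2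
      rw [h] at h2
      exact (Finset.mem_compl.1 h2) h1
    · rw [dif_neg hp, dif_neg hq] at h
      have h2 := (Aᶜ.orderIsoOfFin (hcompl A hA)).injective (Subtype.ext h)
      have h3 := g2.1.injective h2
      exact Subtype.ext (congrArg (fun x : {p : List Bool // p ∈ S2} => x.1) h3)
  have hmkbij : ∀ A hA g1 g2, Function.Bijective (mk A hA g1 g2) := by
    intro A hA g1 g2
    exact (Fintype.bijective_iff_injective_and_card _).2
      ⟨hmkinj A hA g1 g2, by simp [Fintype.card_coe]⟩
  have hmkdesc : ∀ A hA g1 g2, ∀ p q : {p : List Bool // p ∈ S1 ∪ S2},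
      SP p.1 q.1 → mk A hA g1 g2 q < mk A hA g1 g2 p := by
    intro A hA g1 g2 p q hpq
    by_cases hp : p.1 ∈ S1 <;> by_cases hq : q.1 ∈ S1
    · have hlt := g1.2 ⟨p.1, hp⟩ ⟨q.1, hq⟩ hpq
      have h2 : (A.orderIsoOfFin hA) (g1.1 ⟨q.1, hq⟩) < (A.orderIsoOfFin hA) (g1.1 ⟨p.1, hp⟩) :=
        (OrderIso.lt_iff_lt _).2 hlt
      simp only [mk, dif_pos hp, dif_pos hq]
      exact Subtype.coe_lt_coe.2 h2
    · exact absurd hpq.1 (hcross p.1 hp q.1 (hnotS1 q hq)).1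
    · exact absurd hpq.1 (hcross q.1 hq p.1 (hnotS1 p hp)).2
    · have hlt := g2.2 ⟨p.1, hnotS1 p hp⟩ ⟨q.1, hnotS1 q hq⟩ hpq
      have h2 := (OrderIso.lt_iff_lt (Aᶜ.orderIsoOfFin (hcompl A hA))).2 hlt
      simp only [mk, dif_neg hp, dif_neg hq]
      exact Subtype.coe_lt_coe.2 h2
  let Ψ : ({A : Finset (Fin (S1 ∪ S2).card) // A.card = S1.card} × Desc S1 × Desc S2) →
      Desc (S1 ∪ S2) := fun x =>
    ⟨Equiv.ofBijective _ (hmkbij x.1.1 x.1.2 x.2.1 x.2.2), hmkdesc x.1.1 x.1.2 x.2.1 x.2.2⟩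
  -- recovering A from the function
  have himg : ∀ A hA g1 g2,
      S1.attach.image (fun p => mk A hA g1 g2 ⟨p.1, mem1 p.1 p.2⟩) = A := by
    intro A hA g1 g2
    apply Finset.eq_of_subset_of_card_le
    · intro a ha
      obtain ⟨p, -, rfl⟩ := Finset.mem_image.1 ha
      simp only [mk, dif_pos p.2]
      exact ((A.orderIsoOfFin hA) (g1.1 ⟨p.1, p.2⟩)).2
    · have hinj' : Function.Injective (fun p : {p : List Bool // p ∈ S1} =>
          mk A hA g1 g2 ⟨p.1, mem1 p.1 p.2⟩) := by
        intro p q h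
        have h2 := hmkinj A hA g1 g2 h
        exact Subtype.ext (congrArg (fun x : {p : List Bool // p ∈ S1 ∪ S2} => x.1) h2)
      rw [Finset.card_image_of_injective _ hinj', Finset.card_attach, hA]
  have hΨinj : Function.Injective Ψ := by
    rintro ⟨⟨A, hA⟩, g1, g2⟩ ⟨⟨A', hA'⟩, g1', g2'⟩ h
    have hfun : ∀ p : {p : List Bool // p ∈ S1 ∪ S2},
        mk A hA g1 g2 p = mk A' hA' g1' g2' p :=
      fun p => congrArg (fun d : Desc (S1 ∪ S2) => d.1 p) h
    have hAA : A = A' := by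
      rw [← himg A hA g1 g2, ← himg A' hA' g1' g2']
      exact Finset.image_congr (fun p _ => hfun ⟨p.1, mem1 p.1 p.2⟩)
    subst hAA
    have hg1 : g1 = g1' := by
      refine Subtype.ext (Equiv.ext fun p => ?_)
      have h2 := hfun ⟨p.1, mem1 p.1 p.2⟩
      simp only [mk, dif_pos p.2] at h2
      exact (A.orderIsoOfFin hA).injective (Subtype.ext h2)
    have hg2 : g2 = g2' := by
      refine Subtype.ext (Equiv.ext fun p => ?_)
      have hnp : p.1 ∉ S1 := Finset.disjoint_right.1 hdisj p.2
      have h2 := hfun ⟨p.1, mem2 p.1 p.2⟩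
      simp only [mk, dif_neg hnp] at h2
      exact (Aᶜ.orderIsoOfFin (hcompl A hA)).injective (Subtype.ext h2)
    rw [hg1, hg2]
  have hΨsurj : Function.Surjective Ψ := by
    intro f
    set A := S1.attach.image (fun p : {p : List Bool // p ∈ S1} =>
      f.1 ⟨p.1, mem1 p.1 p.2⟩) with hAdef
    have hfinj : ∀ p q : {p : List Bool // p ∈ S1},
        f.1 ⟨p.1, mem1 p.1 p.2⟩ = f.1 ⟨q.1, mem1 q.1 q.2⟩ → p = q := by
      intro p q h
      have := f.1.injective h
      exact Subtype.ext (congrArg (fun x : {p : List Bool // p ∈ S1 ∪ S2} => x.1) this)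
    have hA : A.card = S1.card := by
      rw [hAdef, Finset.card_image_of_injective _ hfinj, Finset.card_attach]
    have memA : ∀ p : {p : List Bool // p ∈ S1}, f.1 ⟨p.1, mem1 p.1 p.2⟩ ∈ A :=
      fun p => Finset.mem_image_of_mem _ (Finset.mem_attach _ p)
    have memAc : ∀ p : {p : List Bool // p ∈ S2}, f.1 ⟨p.1, mem2 p.1 p.2⟩ ∈ Aᶜ := by
      intro p
      rw [Finset.mem_compl]
      intro hmem
      obtain ⟨q, -, hq⟩ := Finset.mem_image.1 hmem
      have := f.1.injective hq
      have h3 : q.1 = p.1 := congrArg (fun x : {p : List Bool // p ∈ S1 ∪ S2} => x.1) this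
      exact Finset.disjoint_left.1 hdisj (h3 ▸ q.2) p.2
    have hbij1 : Function.Bijective (fun p : {p : List Bool // p ∈ S1} =>
        (A.orderIsoOfFin hA).symm ⟨f.1 ⟨p.1, mem1 p.1 p.2⟩, memA p⟩) := by
      refine (Fintype.bijective_iff_injective_and_card _).2 ⟨?_, by simp [Fintype.card_coe, hA]⟩
      intro p q h
      have h2 := (A.orderIsoOfFin hA).symm.injective h
      exact hfinj p q (congrArg Subtype.val h2)
    have hbij2 : Function.Bijective (fun p : {p : List Bool // p ∈ S2} =>
        (Aᶜ.orderIsoOfFin (hcompl A hA)).symm ⟨f.1 ⟨p.1, mem2 p.1 p.2⟩, memAc p⟩) := by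
      refine (Fintype.bijective_iff_injective_and_card _).2
        ⟨?_, by simp [Fintype.card_coe, hcompl A hA]⟩
      intro p q h
      have h2 := (Aᶜ.orderIsoOfFin (hcompl A hA)).symm.injective h
      have h3 := congrArg Subtype.val h2
      have := f.1.injective h3
      exact Subtype.ext (congrArg (fun x : {p : List Bool // p ∈ S1 ∪ S2} => x.1) this)
    refine ⟨(⟨A, hA⟩, ⟨Equiv.ofBijective _ hbij1, ?_⟩, ⟨Equiv.ofBijective _ hbij2, ?_⟩), ?_⟩
    · intro p q hpq
      have hlt := f.2 ⟨p.1, mem1 p.1 p.2⟩ ⟨q.1, mem1 q.1 q.2⟩ hpq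
      simp only [Equiv.ofBijective_apply]
      rw [OrderIso.lt_iff_lt]
      exact Subtype.mk_lt_mk.2 hlt
    · intro p q hpq
      have hlt := f.2 ⟨p.1, mem2 p.1 p.2⟩ ⟨q.1, mem2 q.1 q.2⟩ hpq
      simp only [Equiv.ofBijective_apply]
      rw [OrderIso.lt_iff_lt]
      exact Subtype.mk_lt_mk.2 hlt
    · refine Subtype.ext (Equiv.ext fun p => ?_)
      show mk A hA _ _ p = f.1 p
      by_cases h : p.1 ∈ S1
      · simp only [mk, dif_pos h]
        simp only [Equiv.ofBijective_apply]
        rw [OrderIso.apply_symm_apply]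
      · simp only [mk, dif_neg h]
        simp only [Equiv.ofBijective_apply]
        rw [OrderIso.apply_symm_apply]
  have hcard := Nat.card_congr (Equiv.ofBijective Ψ ⟨hΨinj, hΨsurj⟩)
  rw [← hcard, Nat.card_prod, Nat.card_prod]
  congr 1
  rw [Nat.card_eq_fintype_card, Fintype.card_finset_len, Fintype.card_fin, hn]


namespace BT
open Finset

lemma nil_mem_positions {B : BT} : [] ∈ B.positions ↔ B ≠ leaf := by
  cases B <;> simp [positions]

lemma leftPos_leaf : leftPos leaf = ∅ := rfl
lemma rightPos_leaf : rightPos leaf = ∅ := rfl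

lemma nil_not_mem_leftPos {B : BT} : [] ∉ B.leftPos := by
  intro h
  have := (Finset.mem_filter.1 h).2
  simp at this

lemma nil_not_mem_rightPos {B : BT} : [] ∉ B.rightPos := by
  intro h
  have := (Finset.mem_filter.1 h).2
  simp at this

lemma getLast?_cons_ne_nil {b : Bool} {q : List Bool} (hq : q ≠ []) :
    (b :: q).getLast? = q.getLast? := by
  cases q with
  | nil => exact absurd rfl hq
  | cons c r => exact List.getLast?_cons_cons

lemma mem_leftPos_iff {B : BT} {p : List Bool} :
    p ∈ B.leftPos ↔ p ∈ B.positions ∧ p.getLast? = some false := Finset.mem_filter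

lemma mem_rightPos_iff {B : BT} {p : List Bool} :
    p ∈ B.rightPos ↔ p ∈ B.positions ∧ p.getLast? = some true := Finset.mem_filter

lemma mem_positions_node {L R : BT} {p : List Bool} :
    p ∈ (node L R).positions ↔
      p = [] ∨ (∃ q ∈ L.positions, p = false :: q) ∨ (∃ q ∈ R.positions, p = true :: q) := by
  simp only [positions, Finset.mem_insert, Finset.mem_union, Finset.mem_image]
  constructor
  · rintro (rfl | ⟨q, hq, rfl⟩ | ⟨q, hq, rfl⟩)
    · exact Or.inl rfl
    · exact Or.inr (Or.inl ⟨q, hq, rfl⟩)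
    · exact Or.inr (Or.inr ⟨q, hq, rfl⟩)
  · rintro (rfl | ⟨q, hq, rfl⟩ | ⟨q, hq, rfl⟩)
    · exact Or.inl rfl
    · exact Or.inr (Or.inl ⟨q, hq, rfl⟩)
    · exact Or.inr (Or.inr ⟨q, hq, rfl⟩)

lemma mem_leftPos_node {L R : BT} {p : List Bool} :
    p ∈ (node L R).leftPos ↔
      (p = [false] ∧ L ≠ leaf) ∨ (∃ q ∈ L.leftPos, p = false :: q)
        ∨ (∃ q ∈ R.leftPos, p = true :: q) := by
  rw [mem_leftPos_iff, mem_positions_node]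
  constructor
  · rintro ⟨(rfl | ⟨q, hq, rfl⟩ | ⟨q, hq, rfl⟩), hlast⟩
    · simp at hlast
    · rcases eq_or_ne q [] with rfl | hqn
      · exact Or.inl ⟨rfl, nil_mem_positions.1 hq⟩
      · rw [getLast?_cons_ne_nil hqn] at hlast
        exact Or.inr (Or.inl ⟨q, mem_leftPos_iff.2 ⟨hq, hlast⟩, rfl⟩)
    · rcases eq_or_ne q [] with rfl | hqn
      · simp at hlast
      · rw [getLast?_cons_ne_nil hqn] at hlast
        exact Or.inr (Or.inr ⟨q, mem_leftPos_iff.2 ⟨hq, hlast⟩, rfl⟩)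
  · rintro (⟨rfl, hL⟩ | ⟨q, hq, rfl⟩ | ⟨q, hq, rfl⟩)
    · exact ⟨Or.inr (Or.inl ⟨[], nil_mem_positions.2 hL, rfl⟩), rfl⟩
    · obtain ⟨hq1, hq2⟩ := mem_leftPos_iff.1 hq
      have hqn : q ≠ [] := fun h => by subst h; simp at hq2
      exact ⟨Or.inr (Or.inl ⟨q, hq1, rfl⟩), by rw [getLast?_cons_ne_nil hqn]; exact hq2⟩
    · obtain ⟨hq1, hq2⟩ := mem_leftPos_iff.1 hq
      have hqn : q ≠ [] := fun h => by subst h; simp at hq2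
      exact ⟨Or.inr (Or.inr ⟨q, hq1, rfl⟩), by rw [getLast?_cons_ne_nil hqn]; exact hq2⟩

lemma mem_rightPos_node {L R : BT} {p : List Bool} :
    p ∈ (node L R).rightPos ↔
      (p = [true] ∧ R ≠ leaf) ∨ (∃ q ∈ L.rightPos, p = false :: q)
        ∨ (∃ q ∈ R.rightPos, p = true :: q) := by
  rw [mem_rightPos_iff, mem_positions_node]
  constructor
  · rintro ⟨(rfl | ⟨q, hq, rfl⟩ | ⟨q, hq, rfl⟩), hlast⟩
    · simp at hlast
    · rcases eq_or_ne q [] with rfl | hqn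
      · simp at hlast
      · rw [getLast?_cons_ne_nil hqn] at hlast
        exact Or.inr (Or.inl ⟨q, mem_rightPos_iff.2 ⟨hq, hlast⟩, rfl⟩)
    · rcases eq_or_ne q [] with rfl | hqn
      · exact Or.inl ⟨rfl, nil_mem_positions.1 hq⟩
      · rw [getLast?_cons_ne_nil hqn] at hlast
        exact Or.inr (Or.inr ⟨q, mem_rightPos_iff.2 ⟨hq, hlast⟩, rfl⟩)
  · rintro (⟨rfl, hR⟩ | ⟨q, hq, rfl⟩ | ⟨q, hq, rfl⟩)
    · exact ⟨Or.inr (Or.inr ⟨[], nil_mem_positions.2 hR, rfl⟩), rfl⟩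
    · obtain ⟨hq1, hq2⟩ := mem_rightPos_iff.1 hq
      have hqn : q ≠ [] := fun h => by subst h; simp at hq2
      exact ⟨Or.inr (Or.inl ⟨q, hq1, rfl⟩), by rw [getLast?_cons_ne_nil hqn]; exact hq2⟩
    · obtain ⟨hq1, hq2⟩ := mem_rightPos_iff.1 hq
      have hqn : q ≠ [] := fun h => by subst h; simp at hq2
      exact ⟨Or.inr (Or.inr ⟨q, hq1, rfl⟩), by rw [getLast?_cons_ne_nil hqn]; exact hq2⟩

/-- left-part of the left positions of a node -/
def lset (L : BT) : Finset (List Bool) :=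
  (if L = leaf then ∅ else {[false]}) ∪ L.leftPos.image (List.cons false)

/-- right-part of the right positions of a node -/
def rset (R : BT) : Finset (List Bool) :=
  (if R = leaf then ∅ else {[true]}) ∪ R.rightPos.image (List.cons true)

lemma mem_lset {L : BT} {p : List Bool} :
    p ∈ lset L ↔ (p = [false] ∧ L ≠ leaf) ∨ (∃ q ∈ L.leftPos, p = false :: q) := by
  unfold lset
  by_cases hL : L = leaf <;> simp [hL, eq_comm]

lemma mem_rset {R : BT} {p : List Bool} :
    p ∈ rset R ↔ (p = [true] ∧ R ≠ leaf) ∨ (∃ q ∈ R.rightPos, p = true :: q) := by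
  unfold rset
  by_cases hR : R = leaf <;> simp [hR, eq_comm]

lemma leftPos_node_eq (L R : BT) :
    (node L R).leftPos = lset L ∪ R.leftPos.image (List.cons true) := by
  ext p
  rw [mem_leftPos_node, Finset.mem_union, mem_lset, Finset.mem_image]
  constructor
  · rintro (h | h | ⟨q, hq, rfl⟩)
    · exact Or.inl (Or.inl h)
    · exact Or.inl (Or.inr h)
    · exact Or.inr ⟨q, hq, rfl⟩
  · rintro ((h | h) | ⟨q, hq, rfl⟩)
    · exact Or.inl h
    · exact Or.inr (Or.inl h)
    · exact Or.inr (Or.inr ⟨q, hq, rfl⟩)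

lemma rightPos_node_eq (L R : BT) :
    (node L R).rightPos = L.rightPos.image (List.cons false) ∪ rset R := by
  ext p
  rw [mem_rightPos_node, Finset.mem_union, mem_rset, Finset.mem_image]
  constructor
  · rintro (h | ⟨q, hq, rfl⟩ | h)
    · exact Or.inr (Or.inl h)
    · exact Or.inl ⟨q, hq, rfl⟩
    · exact Or.inr (Or.inr h)
  · rintro (⟨q, hq, rfl⟩ | (h | h))
    · exact Or.inr (Or.inl ⟨q, hq, rfl⟩)
    · exact Or.inl h
    · exact Or.inr (Or.inr h)

lemma card_lset (L : BT) : (lset L).card = L.leftPos.card + (if L = leaf then 0 else 1) := by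
  unfold lset
  by_cases hL : L = leaf
  · simp [hL, leftPos_leaf]
  · rw [if_neg hL, if_neg hL, ← Finset.insert_eq]
    rw [Finset.card_insert_of_notMem, Finset.card_image_of_injective _ List.cons_injective]
    intro h
    obtain ⟨q, hq, hq2⟩ := Finset.mem_image.1 h
    have : q = [] := by injection hq2
    exact nil_not_mem_leftPos (this ▸ hq)

lemma card_rset (R : BT) : (rset R).card = R.rightPos.card + (if R = leaf then 0 else 1) := by
  unfold rset
  by_cases hR : R = leaf
  · simp [hR, rightPos_leaf]
  · rw [if_neg hR, if_neg hR, ← Finset.insert_eq]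
    rw [Finset.card_insert_of_notMem, Finset.card_image_of_injective _ List.cons_injective]
    intro h
    obtain ⟨q, hq, hq2⟩ := Finset.mem_image.1 h
    have : q = [] := by injection hq2
    exact nil_not_mem_rightPos (this ▸ hq)

lemma card_desc_lset (L : BT) : Nat.card (Desc (lset L)) = Nat.card (Desc L.leftPos) := by
  by_cases hL : L = leaf
  · subst hL
    have h1 : lset leaf = ∅ := by
      unfold lset
      simp [leftPos_leaf]
    rw [h1, leftPos_leaf]
  · have h1 : lset L = insert [false] (L.leftPos.image (List.cons false)) := by
      unfold lset
      rw [if_neg hL, ← Finset.insert_eq]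
    have hnm : [false] ∉ L.leftPos.image (List.cons false) := by
      intro h
      obtain ⟨q, hq, hq2⟩ := Finset.mem_image.1 h
      have : q = [] := by injection hq2
      exact nil_not_mem_leftPos (this ▸ hq)
    rw [h1, card_desc_top _ [false] (Finset.mem_insert_self _ _) ?top,
      Finset.erase_insert hnm, card_desc_image]
    case top =>
      intro p hp hne
      rcases Finset.mem_insert.1 hp with rfl | hp2
      · exact absurd rfl hne
      · obtain ⟨q, hq, rfl⟩ := Finset.mem_image.1 hp2
        exact ⟨List.cons_prefix_cons.2 ⟨rfl, List.nil_prefix⟩, fun h => by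
          have : q = [] := by injection h.symm
          exact nil_not_mem_leftPos (this ▸ hq)⟩

lemma card_desc_rset (R : BT) : Nat.card (Desc (rset R)) = Nat.card (Desc R.rightPos) := by
  by_cases hR : R = leaf
  · subst hR
    have h1 : rset leaf = ∅ := by
      unfold rset
      simp [rightPos_leaf]
    rw [h1, rightPos_leaf]
  · have h1 : rset R = insert [true] (R.rightPos.image (List.cons true)) := by
      unfold rset
      rw [if_neg hR, ← Finset.insert_eq]
    have hnm : [true] ∉ R.rightPos.image (List.cons true) := by
      intro h
      obtain ⟨q, hq, hq2⟩ := Finset.mem_image.1 h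
      have : q = [] := by injection hq2
      exact nil_not_mem_rightPos (this ▸ hq)
    rw [h1, card_desc_top _ [true] (Finset.mem_insert_self _ _) ?top,
      Finset.erase_insert hnm, card_desc_image]
    case top =>
      intro p hp hne
      rcases Finset.mem_insert.1 hp with rfl | hp2
      · exact absurd rfl hne
      · obtain ⟨q, hq, rfl⟩ := Finset.mem_image.1 hp2
        exact ⟨List.cons_prefix_cons.2 ⟨rfl, List.nil_prefix⟩, fun h => by
          have : q = [] := by injection h.symm
          exact nil_not_mem_rightPos (this ▸ hq)⟩

lemma lset_head {L : BT} {p : List Bool} (hp : p ∈ lset L) : ∃ q, p = false :: q := by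
  rcases mem_lset.1 hp with ⟨rfl, -⟩ | ⟨q, -, rfl⟩
  · exact ⟨[], rfl⟩
  · exact ⟨q, rfl⟩

lemma rset_head {R : BT} {p : List Bool} (hp : p ∈ rset R) : ∃ q, p = true :: q := by
  rcases mem_rset.1 hp with ⟨rfl, -⟩ | ⟨q, -, rfl⟩
  · exact ⟨[], rfl⟩
  · exact ⟨q, rfl⟩

lemma disj_L (L : BT) (S : Finset (List Bool)) :
    Disjoint (lset L) (S.image (List.cons true)) := by
  rw [Finset.disjoint_left]
  intro p hp hp2
  obtain ⟨q, rfl⟩ := lset_head hp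
  obtain ⟨r, hr, hrq⟩ := Finset.mem_image.1 hp2
  simp at hrq

lemma disj_R (R : BT) (S : Finset (List Bool)) :
    Disjoint (S.image (List.cons false)) (rset R) := by
  rw [Finset.disjoint_right]
  intro p hp hp2
  obtain ⟨q, rfl⟩ := rset_head hp
  obtain ⟨r, hr, hrq⟩ := Finset.mem_image.1 hp2
  simp at hrq

lemma cross_L (L : BT) (S : Finset (List Bool)) :
    ∀ p ∈ lset L, ∀ q ∈ S.image (List.cons true), ¬ p <+: q ∧ ¬ q <+: p := by
  intro p hp q hq
  obtain ⟨a, rfl⟩ := lset_head hp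
  obtain ⟨b, hb, rfl⟩ := Finset.mem_image.1 hq
  constructor
  · intro h
    simpa using (List.cons_prefix_cons.1 h).1
  · intro h
    simpa using (List.cons_prefix_cons.1 h).1

lemma cross_R (R : BT) (S : Finset (List Bool)) :
    ∀ p ∈ S.image (List.cons false), ∀ q ∈ rset R, ¬ p <+: q ∧ ¬ q <+: p := by
  intro p hp q hq
  obtain ⟨a, rfl⟩ := rset_head hq
  obtain ⟨b, hb, rfl⟩ := Finset.mem_image.1 hp
  constructor
  · intro h
    simpa using (List.cons_prefix_cons.1 h).1
  · intro h
    simpa using (List.cons_prefix_cons.1 h).1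

lemma card_leftPos_node (L R : BT) :
    (node L R).leftPos.card =
      (L.leftPos.card + (if L = leaf then 0 else 1)) + R.leftPos.card := by
  rw [leftPos_node_eq, Finset.card_union_of_disjoint (disj_L L _), card_lset,
    Finset.card_image_of_injective _ List.cons_injective]

lemma card_rightPos_node (L R : BT) :
    (node L R).rightPos.card =
      L.rightPos.card + (R.rightPos.card + (if R = leaf then 0 else 1)) := by
  rw [rightPos_node_eq, Finset.card_union_of_disjoint (disj_R R _), card_rset,
    Finset.card_image_of_injective _ List.cons_injective]

lemma card_desc_leftPos_node (L R : BT) :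
    Nat.card (Desc (node L R).leftPos) =
      ((L.leftPos.card + (if L = leaf then 0 else 1)) + R.leftPos.card).choose
          (L.leftPos.card + (if L = leaf then 0 else 1)) *
        (Nat.card (Desc L.leftPos) * Nat.card (Desc R.leftPos)) := by
  rw [leftPos_node_eq, card_desc_union _ _ (disj_L L _) (cross_L L _), card_lset,
    card_desc_lset, Finset.card_image_of_injective _ List.cons_injective, card_desc_image]

lemma card_desc_rightPos_node (L R : BT) :
    Nat.card (Desc (node L R).rightPos) =
      (L.rightPos.card + (R.rightPos.card + (if R = leaf then 0 else 1))).choose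
          L.rightPos.card *
        (Nat.card (Desc L.rightPos) * Nat.card (Desc R.rightPos)) := by
  rw [rightPos_node_eq, card_desc_union _ _ (disj_R R _) (cross_R R _), card_rset,
    card_desc_rset, Finset.card_image_of_injective _ List.cons_injective, card_desc_image]

end BT

lemma card_NAT_eq (B : BT) :
    Nat.card (NAT B) = Nat.card (Desc B.leftPos) * Nat.card (Desc B.rightPos) := by
  rw [← Nat.card_prod]
  apply Nat.card_congr
  exact
    { toFun := fun T =>
        (⟨Equiv.ofBijective T.labL T.bijL, fun p q h => T.ancL p q h.1 h.2⟩,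
         ⟨Equiv.ofBijective T.labR T.bijR, fun p q h => T.ancR p q h.1 h.2⟩)
      invFun := fun x =>
        ⟨⇑x.1.1, ⇑x.2.1, x.1.1.bijective, x.2.1.bijective,
          fun p q h1 h2 => x.1.2 p q ⟨h1, h2⟩, fun p q h1 h2 => x.2.2 p q ⟨h1, h2⟩⟩
      left_inv := fun T => rfl
      right_inv := fun x => by
        refine Prod.ext ?_ ?_ <;> exact Subtype.ext (Equiv.ext fun p => rfl) }

lemma card_NAT_leaf : Nat.card (NAT BT.leaf) = 1 := by
  rw [card_NAT_eq, BT.leftPos_leaf, BT.rightPos_leaf, card_desc_empty]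

lemma card_NAT_node (L R : BT) :
    Nat.card (NAT (BT.node L R)) =
      (((L.leftPos.card + (if L = BT.leaf then 0 else 1)) + R.leftPos.card).choose
          (L.leftPos.card + (if L = BT.leaf then 0 else 1))) *
      ((L.rightPos.card + (R.rightPos.card + (if R = BT.leaf then 0 else 1))).choose
          L.rightPos.card) *
      (Nat.card (NAT L) * Nat.card (NAT R)) := by
  rw [card_NAT_eq, BT.card_desc_leftPos_node, BT.card_desc_rightPos_node,
    card_NAT_eq, card_NAT_eq]
  ring

namespace BT

lemma lo_node (L R : BT) : (node L R).lo = L.ldepth := by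
  simp [lo, ldepth]

lemma ro_node (L R : BT) : (node L R).ro = R.rdepth := by
  simp [ro, rdepth]

lemma ldepth_eq_lo {L : BT} (h : L ≠ leaf) : L.ldepth = L.lo + 1 := by
  cases L with
  | leaf => exact absurd rfl h
  | node l r => simp [lo, ldepth]

lemma rdepth_eq_ro {R : BT} (h : R ≠ leaf) : R.rdepth = R.ro + 1 := by
  cases R with
  | leaf => exact absurd rfl h
  | node l r => simp [ro, rdepth]

/-- size of a binary tree -/
def sz : BT → ℕ
  | leaf => 0
  | node l r => sz l + sz r + 1

lemma sz_eq (B : BT) :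
    sz B = B.leftPos.card + B.rightPos.card + (if B = leaf then 0 else 1) := by
  induction B with
  | leaf => simp [sz, leftPos_leaf, rightPos_leaf]
  | node L R ihL ihR =>
    have hne : (node L R) ≠ leaf := fun h => by injection h
    rw [if_neg hne]
    show sz L + sz R + 1 = _
    rw [ihL, ihR, card_leftPos_node, card_rightPos_node]
    by_cases hL : L = leaf <;> by_cases hR : R = leaf <;> simp [hL, hR] <;> omega

/-- all binary trees of size at most `n` -/
def allBT : ℕ → Finset BT
  | 0 => {leaf}
  | n+1 => insert leaf (((allBT n) ×ˢ (allBT n)).image fun p => node p.1 p.2)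

lemma mem_allBT {n : ℕ} {B : BT} (h : sz B ≤ n) : B ∈ allBT n := by
  induction n generalizing B with
  | zero =>
    cases B with
    | leaf => simp [allBT]
    | node L R => simp [sz] at h
  | succ n ih =>
    cases B with
    | leaf => simp [allBT]
    | node L R =>
      have h2 : sz L ≤ n ∧ sz R ≤ n := by
        simp only [sz] at h
        omega
      exact Finset.mem_insert.2 (Or.inr (Finset.mem_image.2
        ⟨(L, R), Finset.mem_product.2 ⟨ih h2.1, ih h2.2⟩, rfl⟩))

end BT

/-- nonempty shapes with `i` left and `j` right children -/
def shapes (i j : ℕ) : Finset BT :=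
  (BT.allBT (i+j+1)).filter fun B => B ≠ BT.leaf ∧ B.leftPos.card = i ∧ B.rightPos.card = j

lemma mem_shapes {i j : ℕ} {B : BT} :
    B ∈ shapes i j ↔ B ≠ BT.leaf ∧ B.leftPos.card = i ∧ B.rightPos.card = j := by
  constructor
  · exact fun h => (Finset.mem_filter.1 h).2
  · intro h
    refine Finset.mem_filter.2 ⟨BT.mem_allBT ?_, h⟩
    rw [BT.sz_eq, if_neg h.1, h.2.1, h.2.2]

/-- shapes for the left factor -/
def lshapes (i j : ℕ) : Finset BT :=
  (BT.allBT (i+j)).filter fun L =>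
    L.leftPos.card + (if L = BT.leaf then 0 else 1) = i ∧ L.rightPos.card = j

lemma mem_lshapes {i j : ℕ} {L : BT} :
    L ∈ lshapes i j ↔
      L.leftPos.card + (if L = BT.leaf then 0 else 1) = i ∧ L.rightPos.card = j := by
  constructor
  · exact fun h => (Finset.mem_filter.1 h).2
  · intro h
    refine Finset.mem_filter.2 ⟨BT.mem_allBT ?_, h⟩
    rw [BT.sz_eq, ← h.1, ← h.2]
    omega

/-- shapes for the right factor -/
def rshapes (i j : ℕ) : Finset BT :=
  (BT.allBT (i+j)).filter fun R =>
    R.leftPos.card = i ∧ R.rightPos.card + (if R = BT.leaf then 0 else 1) = j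

lemma mem_rshapes {i j : ℕ} {R : BT} :
    R ∈ rshapes i j ↔
      R.leftPos.card = i ∧ R.rightPos.card + (if R = BT.leaf then 0 else 1) = j := by
  constructor
  · exact fun h => (Finset.mem_filter.1 h).2
  · intro h
    refine Finset.mem_filter.2 ⟨BT.mem_allBT ?_, h⟩
    rw [BT.sz_eq, ← h.1, ← h.2]
    omega

end Machinery


section GF
open Finset

lemma GFNab_apply (a b : Rab) (d : Fin 2 →₀ ℕ) :
    GFNab a b d = ((((d 0).factorial : ℚ) * ((d 1).factorial : ℚ))⁻¹) •
      ∑ B ∈ shapes (d 0) (d 1), (Nat.card (NAT B)) • (a ^ B.lo * b ^ B.ro) := by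
  unfold GFNab
  congr 1
  have hPdef : ∀ B : BT, (B ≠ BT.leaf ∧ B.leftPos.card = d 0 ∧ B.rightPos.card = d 1)
      ↔ B ∈ shapes (d 0) (d 1) := fun B => mem_shapes.symm
  haveI fB : Fintype {B : BT // B ≠ BT.leaf ∧ B.leftPos.card = d 0 ∧ B.rightPos.card = d 1} :=
    Fintype.subtype (shapes (d 0) (d 1)) (fun B => (hPdef B).symm)
  let E : {T : Σ B : BT, NAT B // T.1 ≠ BT.leaf ∧ T.1.leftPos.card = d 0 ∧ T.1.rightPos.card = d 1}
      ≃ (Σ B : {B : BT // B ≠ BT.leaf ∧ B.leftPos.card = d 0 ∧ B.rightPos.card = d 1}, NAT B.1) :=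
    { toFun := fun T => ⟨⟨T.1.1, T.2⟩, T.1.2⟩
      invFun := fun x => ⟨⟨x.1.1, x.2⟩, x.1.2⟩
      left_inv := fun T => rfl
      right_inv := fun x => rfl }
  haveI : Fintype {T : Σ B : BT, NAT B //
      T.1 ≠ BT.leaf ∧ T.1.leftPos.card = d 0 ∧ T.1.rightPos.card = d 1} :=
    Fintype.ofEquiv _ E.symm
  rw [finsum_eq_sum_of_fintype]
  rw [← Equiv.sum_comp E.symm (fun T => a ^ T.1.1.lo * b ^ T.1.1.ro)]
  rw [← Finset.univ_sigma_univ, Finset.sum_sigma]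
  refine Eq.trans (Finset.sum_congr rfl fun B _ => ?_)
    ((Finset.sum_subtype _ (fun B => (hPdef B).symm)
      (fun B => (Nat.card (NAT B)) • (a ^ B.lo * b ^ B.ro))).symm)
  show (∑ _s : NAT B.1, a ^ B.1.lo * b ^ B.1.ro) = (Nat.card (NAT B.1)) • (a ^ B.1.lo * b ^ B.1.ro)
  rw [Finset.sum_const, Finset.card_univ, Nat.card_eq_fintype_card]

lemma fin2_ext {g h : Fin 2 →₀ ℕ} (h0 : g 0 = h 0) (h1 : g 1 = h 1) : g = h := by
  ext x
  fin_cases x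
  · exact h0
  · exact h1

lemma fin2_eq_zero_iff {e : Fin 2 →₀ ℕ} : e = 0 ↔ e 0 = 0 ∧ e 1 = 0 :=
  ⟨fun h => by simp [h], fun h => fin2_ext (by simpa using h.1) (by simpa using h.2)⟩

lemma mem_lshapes_zero {j : ℕ} {L : BT} : L ∈ lshapes 0 j ↔ (L = BT.leaf ∧ j = 0) := by
  rw [mem_lshapes]
  constructor
  · rintro ⟨h1, h2⟩
    by_cases hL : L = BT.leaf
    · subst hL
      rw [BT.rightPos_leaf] at h2
      exact ⟨rfl, by simpa using h2.symm⟩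
    · rw [if_neg hL] at h1
      omega
  · rintro ⟨rfl, rfl⟩
    simp [BT.leftPos_leaf, BT.rightPos_leaf]

lemma mem_rshapes_zero {i : ℕ} {R : BT} : R ∈ rshapes i 0 ↔ (R = BT.leaf ∧ i = 0) := by
  rw [mem_rshapes]
  constructor
  · rintro ⟨h1, h2⟩
    by_cases hR : R = BT.leaf
    · subst hR
      rw [BT.leftPos_leaf] at h1
      exact ⟨rfl, by simpa using h1.symm⟩
    · rw [if_neg hR] at h2
      omega
  · rintro ⟨rfl, rfl⟩
    simp [BT.leftPos_leaf, BT.rightPos_leaf]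

lemma lshapes_pos {i j : ℕ} (hi : i ≠ 0) : lshapes i j = shapes (i-1) j := by
  ext L
  rw [mem_lshapes, mem_shapes]
  constructor
  · rintro ⟨h1, h2⟩
    have hL : L ≠ BT.leaf := by
      intro h
      subst h
      rw [BT.leftPos_leaf] at h1
      simp at h1
      exact hi h1.symm
    rw [if_neg hL] at h1
    exact ⟨hL, by omega, h2⟩
  · rintro ⟨hL, h1, h2⟩
    rw [if_neg hL]
    exact ⟨by omega, h2⟩

lemma rshapes_pos {i j : ℕ} (hj : j ≠ 0) : rshapes i j = shapes i (j-1) := by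
  ext R
  rw [mem_rshapes, mem_shapes]
  constructor
  · rintro ⟨h1, h2⟩
    have hR : R ≠ BT.leaf := by
      intro h
      subst h
      rw [BT.rightPos_leaf] at h2
      simp at h2
      exact hj h2.symm
    rw [if_neg hR] at h2
    exact ⟨hR, h1, by omega⟩
  · rintro ⟨hR, h1, h2⟩
    rw [if_neg hR]
    exact ⟨h1, by omega⟩

lemma inv_fact_mul (a c : ℕ) (ha : a ≠ 0) :
    ((a : ℚ))⁻¹ * (((a - 1).factorial : ℚ) * (c.factorial : ℚ))⁻¹ =
      ((a.factorial : ℚ) * (c.factorial : ℚ))⁻¹ := by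
  rw [← Nat.mul_factorial_pred ha]
  push_cast
  rw [mul_inv, mul_inv, mul_inv]
  ring

lemma coeff_factor1 (e : Fin 2 →₀ ℕ) :
    (1 + (MvPowerSeries.C : Rab →+* MvPowerSeries (Fin 2) Rab) (MvPolynomial.X 0) * iX (GFNab (MvPolynomial.X 0) 1)) e =
      ((((e 0).factorial : ℚ) * ((e 1).factorial : ℚ))⁻¹) •
        ∑ L ∈ lshapes (e 0) (e 1),
          (Nat.card (NAT L)) • ((MvPolynomial.X 0 : Rab) ^ L.ldepth) := by
  have hadd : (1 + (MvPowerSeries.C : Rab →+* MvPowerSeries (Fin 2) Rab) (MvPolynomial.X 0) *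
        iX (GFNab (MvPolynomial.X 0) 1)) e
      = (if e = 0 then (1:Rab) else 0) +
        (MvPolynomial.X 0 : Rab) * iX (GFNab (MvPolynomial.X 0) 1) e := by
    have h1 : (1 + (MvPowerSeries.C : Rab →+* MvPowerSeries (Fin 2) Rab) (MvPolynomial.X 0) *
        iX (GFNab (MvPolynomial.X 0) 1)) e
        = (1 : MvPowerSeries (Fin 2) Rab) e +
          ((MvPowerSeries.C : Rab →+* MvPowerSeries (Fin 2) Rab) (MvPolynomial.X 0) * iX (GFNab (MvPolynomial.X 0) 1)) e :=
      rfl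
    rw [h1]
    congr 1
    · exact MvPowerSeries.coeff_one (R := Rab) (n := e)
    · rw [← MvPowerSeries.coeff_apply ((MvPowerSeries.C : Rab →+* MvPowerSeries (Fin 2) Rab) (MvPolynomial.X 0) *
          iX (GFNab (MvPolynomial.X 0) 1)) e, MvPowerSeries.coeff_C_mul,
        MvPowerSeries.coeff_apply]
  rw [hadd]
  by_cases h0 : e 0 = 0
  · simp only [iX, if_pos h0, mul_zero, add_zero]
    by_cases h1 : e 1 = 0
    · have he : e = 0 := fin2_eq_zero_iff.2 ⟨h0, h1⟩
      rw [if_pos he, h0, h1]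
      have hls : lshapes 0 0 = {BT.leaf} := by
        ext L
        rw [mem_lshapes_zero]
        simp
      rw [hls, Finset.sum_singleton, card_NAT_leaf]
      show (1:Rab) = _ • (1:ℕ) • ((MvPolynomial.X 0 : Rab) ^ BT.leaf.ldepth)
      norm_num [BT.ldepth]
    · have he : e ≠ 0 := fun h => h1 (by rw [h]; simp)
      rw [if_neg he]
      have hls : lshapes (e 0) (e 1) = ∅ := by
        rw [h0]
        ext L
        simp [mem_lshapes_zero, h1]
      rw [hls, Finset.sum_empty, smul_zero]
  · have he : e ≠ 0 := fun h => h0 (by rw [h]; simp)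
    rw [if_neg he, zero_add]
    simp only [iX, if_neg h0]
    rw [GFNab_apply]
    have he'0 : ((e - Finsupp.single 0 1) : Fin 2 →₀ ℕ) 0 = e 0 - 1 := by
      rw [Finsupp.tsub_apply, Finsupp.single_eq_same]
    have he'1 : ((e - Finsupp.single 0 1) : Fin 2 →₀ ℕ) 1 = e 1 := by
      rw [Finsupp.tsub_apply, Finsupp.single_eq_of_ne (by decide), tsub_zero]
    rw [he'0, he'1, lshapes_pos h0, smul_smul, mul_smul_comm,
      inv_fact_mul _ _ h0]
    congr 1
    rw [Finset.mul_sum]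
    refine Finset.sum_congr rfl fun B hB => ?_
    have hBne := (mem_shapes.1 hB).1
    rw [one_pow, mul_one, mul_smul_comm, BT.ldepth_eq_lo hBne, pow_succ, mul_comm]

lemma coeff_factor2 (e : Fin 2 →₀ ℕ) :
    (1 + (MvPowerSeries.C : Rab →+* MvPowerSeries (Fin 2) Rab) (MvPolynomial.X 1) * iY (GFNab 1 (MvPolynomial.X 1))) e =
      ((((e 0).factorial : ℚ) * ((e 1).factorial : ℚ))⁻¹) •
        ∑ R ∈ rshapes (e 0) (e 1),
          (Nat.card (NAT R)) • ((MvPolynomial.X 1 : Rab) ^ R.rdepth) := by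
  have hadd : (1 + (MvPowerSeries.C : Rab →+* MvPowerSeries (Fin 2) Rab) (MvPolynomial.X 1) *
        iY (GFNab 1 (MvPolynomial.X 1))) e
      = (if e = 0 then (1:Rab) else 0) +
        (MvPolynomial.X 1 : Rab) * iY (GFNab 1 (MvPolynomial.X 1)) e := by
    have h1 : (1 + (MvPowerSeries.C : Rab →+* MvPowerSeries (Fin 2) Rab) (MvPolynomial.X 1) *
        iY (GFNab 1 (MvPolynomial.X 1))) e
        = (1 : MvPowerSeries (Fin 2) Rab) e +
          ((MvPowerSeries.C : Rab →+* MvPowerSeries (Fin 2) Rab) (MvPolynomial.X 1) * iY (GFNab 1 (MvPolynomial.X 1))) e :=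
      rfl
    rw [h1]
    congr 1
    · exact MvPowerSeries.coeff_one (R := Rab) (n := e)
    · rw [← MvPowerSeries.coeff_apply ((MvPowerSeries.C : Rab →+* MvPowerSeries (Fin 2) Rab) (MvPolynomial.X 1) *
          iY (GFNab 1 (MvPolynomial.X 1))) e, MvPowerSeries.coeff_C_mul,
        MvPowerSeries.coeff_apply]
  rw [hadd]
  by_cases h1 : e 1 = 0
  · simp only [iY, if_pos h1, mul_zero, add_zero]
    by_cases h0 : e 0 = 0
    · have he : e = 0 := fin2_eq_zero_iff.2 ⟨h0, h1⟩
      rw [if_pos he, h0, h1]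
      have hrs : rshapes 0 0 = {BT.leaf} := by
        ext R
        rw [mem_rshapes_zero]
        simp
      rw [hrs, Finset.sum_singleton, card_NAT_leaf]
      show (1:Rab) = _ • (1:ℕ) • ((MvPolynomial.X 1 : Rab) ^ BT.leaf.rdepth)
      norm_num [BT.rdepth]
    · have he : e ≠ 0 := fun h => h0 (by rw [h]; simp)
      rw [if_neg he]
      have hrs : rshapes (e 0) (e 1) = ∅ := by
        rw [h1]
        ext R
        simp [mem_rshapes_zero, h0]
      rw [hrs, Finset.sum_empty, smul_zero]
  · have he : e ≠ 0 := fun h => h1 (by rw [h]; simp)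
    rw [if_neg he, zero_add]
    simp only [iY, if_neg h1]
    rw [GFNab_apply]
    have he'0 : ((e - Finsupp.single 1 1) : Fin 2 →₀ ℕ) 0 = e 0 := by
      rw [Finsupp.tsub_apply, Finsupp.single_eq_of_ne (by decide), tsub_zero]
    have he'1 : ((e - Finsupp.single 1 1) : Fin 2 →₀ ℕ) 1 = e 1 - 1 := by
      rw [Finsupp.tsub_apply, Finsupp.single_eq_same]
    rw [he'0, he'1, rshapes_pos h1, smul_smul, mul_smul_comm]
    have hsc : ((e 1 : ℚ))⁻¹ * (((e 0).factorial : ℚ) * (((e 1) - 1).factorial : ℚ))⁻¹ =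
        (((e 0).factorial : ℚ) * ((e 1).factorial : ℚ))⁻¹ := by
      rw [← Nat.mul_factorial_pred h1]
      push_cast
      rw [mul_inv, mul_inv, mul_inv]
      ring
    rw [hsc]
    congr 1
    rw [Finset.mul_sum]
    refine Finset.sum_congr rfl fun B hB => ?_
    have hBne := (mem_shapes.1 hB).1
    rw [one_pow, one_mul, mul_smul_comm, BT.rdepth_eq_ro hBne, pow_succ, mul_comm]

namespace BT

def lchild : BT → BT
  | leaf => leaf
  | node l _ => l

def rchild : BT → BT
  | leaf => leaf
  | node _ r => r

lemma node_lchild_rchild {B : BT} (h : B ≠ leaf) : B = node B.lchild B.rchild := by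
  cases B with
  | leaf => exact absurd rfl h
  | node l r => rfl

end BT

noncomputable def mk2 (m n : ℕ) : Fin 2 →₀ ℕ := Finsupp.single 0 m + Finsupp.single 1 n

lemma mk2_apply0 (m n : ℕ) : mk2 m n 0 = m := by
  rw [mk2, Finsupp.add_apply, Finsupp.single_eq_same,
    Finsupp.single_eq_of_ne (by decide), add_zero]

lemma mk2_apply1 (m n : ℕ) : mk2 m n 1 = n := by
  rw [mk2, Finsupp.add_apply, Finsupp.single_eq_of_ne (by decide),
    Finsupp.single_eq_same, zero_add]

lemma sum_shapes_eq (d : Fin 2 →₀ ℕ) (G : BT → Rab) :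
    ∑ B ∈ shapes (d 0) (d 1), G B =
      ∑ x ∈ (Finset.HasAntidiagonal.antidiagonal d).sigma
          (fun p => (lshapes (p.1 0) (p.1 1)) ×ˢ (rshapes (p.2 0) (p.2 1))),
        G (BT.node x.2.1 x.2.2) := by
  refine Finset.sum_nbij'
    (fun B => ⟨(mk2 (B.lchild.leftPos.card + (if B.lchild = BT.leaf then 0 else 1))
          B.lchild.rightPos.card,
        mk2 B.rchild.leftPos.card
          (B.rchild.rightPos.card + (if B.rchild = BT.leaf then 0 else 1))),
      (B.lchild, B.rchild)⟩)
    (fun x => BT.node x.2.1 x.2.2) ?_ ?_ ?_ ?_ ?_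
  · intro B hB
    obtain ⟨hne, hl, hr⟩ := mem_shapes.1 hB
    refine Finset.mem_sigma.2 ⟨Finset.HasAntidiagonal.mem_antidiagonal.2 ?_, Finset.mem_product.2 ⟨?_, ?_⟩⟩
    · refine fin2_ext ?_ ?_
      · rw [Finsupp.add_apply, mk2_apply0, mk2_apply0, ← hl]
        conv_rhs => rw [BT.node_lchild_rchild hne]
        rw [BT.card_leftPos_node]
      · rw [Finsupp.add_apply, mk2_apply1, mk2_apply1, ← hr]
        conv_rhs => rw [BT.node_lchild_rchild hne]
        rw [BT.card_rightPos_node]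
    · rw [mem_lshapes, mk2_apply0, mk2_apply1]
      exact ⟨rfl, rfl⟩
    · rw [mem_rshapes, mk2_apply0, mk2_apply1]
      exact ⟨rfl, rfl⟩
  · rintro ⟨⟨e, f⟩, L, R⟩ hx
    obtain ⟨hp, hLR⟩ := Finset.mem_sigma.1 hx
    obtain ⟨hL, hR⟩ := Finset.mem_product.1 hLR
    obtain ⟨hL1, hL2⟩ := mem_lshapes.1 hL
    obtain ⟨hR1, hR2⟩ := mem_rshapes.1 hR
    have hd := Finset.HasAntidiagonal.mem_antidiagonal.1 hp
    refine mem_shapes.2 ⟨fun h => BT.noConfusion h, ?_, ?_⟩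
    · rw [BT.card_leftPos_node, hL1, hR1, ← Finsupp.add_apply, hd]
    · rw [BT.card_rightPos_node, hL2, hR2, ← Finsupp.add_apply, hd]
  · intro B hB
    exact (BT.node_lchild_rchild (mem_shapes.1 hB).1).symm
  · rintro ⟨⟨e, f⟩, L, R⟩ hx
    obtain ⟨hp, hLR⟩ := Finset.mem_sigma.1 hx
    obtain ⟨hL, hR⟩ := Finset.mem_product.1 hLR
    obtain ⟨hL1, hL2⟩ := mem_lshapes.1 hL
    obtain ⟨hR1, hR2⟩ := mem_rshapes.1 hR
    simp only [BT.lchild, BT.rchild]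
    have h1 : mk2 (L.leftPos.card + (if L = BT.leaf then 0 else 1)) L.rightPos.card = e :=
      fin2_ext (by rw [mk2_apply0, hL1]) (by rw [mk2_apply1, hL2])
    have h2 : mk2 R.leftPos.card (R.rightPos.card + (if R = BT.leaf then 0 else 1)) = f :=
      fin2_ext (by rw [mk2_apply0, hR1]) (by rw [mk2_apply1, hR2])
    subst h1 h2
    rfl
  · intro B hB
    exact congrArg G (BT.node_lchild_rchild (mem_shapes.1 hB).1)

lemma q_arith (a b c e : ℕ) :
    ((((a+b).factorial : ℚ) * ((c+e).factorial : ℚ))⁻¹) *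
      (((a+b).choose a : ℚ) * ((c+e).choose c : ℚ))
      = (((a.factorial : ℚ) * (c.factorial : ℚ))⁻¹) *
        (((b.factorial : ℚ) * (e.factorial : ℚ))⁻¹) := by
  rw [Nat.cast_choose ℚ (Nat.le_add_right a b), Nat.cast_choose ℚ (Nat.le_add_right c e),
    Nat.add_sub_cancel_left, Nat.add_sub_cancel_left]
  have h1 : ((a.factorial : ℚ)) ≠ 0 := Nat.cast_ne_zero.2 (Nat.factorial_ne_zero _)
  have h2 : ((b.factorial : ℚ)) ≠ 0 := Nat.cast_ne_zero.2 (Nat.factorial_ne_zero _)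
  have h3 : ((c.factorial : ℚ)) ≠ 0 := Nat.cast_ne_zero.2 (Nat.factorial_ne_zero _)
  have h4 : ((e.factorial : ℚ)) ≠ 0 := Nat.cast_ne_zero.2 (Nat.factorial_ne_zero _)
  have h5 : (((a+b).factorial : ℚ)) ≠ 0 := Nat.cast_ne_zero.2 (Nat.factorial_ne_zero _)
  have h6 : (((c+e).factorial : ℚ)) ≠ 0 := Nat.cast_ne_zero.2 (Nat.factorial_ne_zero _)
  field_simp

end GF

/-- The `(α,β)`-generating function of non-ambiguous trees satisfies
`GFN(x,y;α,β) = (1 + α∫₀ˣ GFN(u,y;α,1) du)(1 + β∫₀^y GFN(x,v;1,β) dv)`. -/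
theorem stmt5 :
    GFNab (MvPolynomial.X 0) (MvPolynomial.X 1) =
      (1 + (MvPowerSeries.C : Rab →+* MvPowerSeries (Fin 2) Rab) (MvPolynomial.X 0) * iX (GFNab (MvPolynomial.X 0) 1)) *
      (1 + (MvPowerSeries.C : Rab →+* MvPowerSeries (Fin 2) Rab) (MvPolynomial.X 1) * iY (GFNab 1 (MvPolynomial.X 1))) := by
  funext dd
  have hmul : ((1 + (MvPowerSeries.C : Rab →+* MvPowerSeries (Fin 2) Rab) (MvPolynomial.X 0) *
        iX (GFNab (MvPolynomial.X 0) 1)) *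
      (1 + (MvPowerSeries.C : Rab →+* MvPowerSeries (Fin 2) Rab) (MvPolynomial.X 1) * iY (GFNab 1 (MvPolynomial.X 1)))) dd
      = ∑ p ∈ Finset.HasAntidiagonal.antidiagonal dd,
          (1 + (MvPowerSeries.C : Rab →+* MvPowerSeries (Fin 2) Rab) (MvPolynomial.X 0) *
            iX (GFNab (MvPolynomial.X 0) 1)) p.1 *
          (1 + (MvPowerSeries.C : Rab →+* MvPowerSeries (Fin 2) Rab) (MvPolynomial.X 1) *
            iY (GFNab 1 (MvPolynomial.X 1))) p.2 :=
    MvPowerSeries.coeff_mul dd _ _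
  rw [hmul, GFNab_apply]
  rw [Finset.sum_congr rfl (fun p (_ : p ∈ Finset.HasAntidiagonal.antidiagonal dd) => by
    rw [coeff_factor1 p.1, coeff_factor2 p.2])]
  rw [sum_shapes_eq dd (fun B => (Nat.card (NAT B)) •
    ((MvPolynomial.X 0 : Rab) ^ B.lo * (MvPolynomial.X 1 : Rab) ^ B.ro)),
    Finset.smul_sum, Finset.sum_sigma]
  refine Finset.sum_congr rfl fun p hp => ?_
  rw [smul_mul_smul_comm, Finset.sum_mul_sum, ← Finset.sum_product', Finset.smul_sum]
  refine Finset.sum_congr rfl fun x hx => ?_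
  obtain ⟨hL, hR⟩ := Finset.mem_product.1 hx
  obtain ⟨hL1, hL2⟩ := mem_lshapes.1 hL
  obtain ⟨hR1, hR2⟩ := mem_rshapes.1 hR
  have hd := Finset.HasAntidiagonal.mem_antidiagonal.1 hp
  have hd0 : dd 0 = p.1 0 + p.2 0 := by rw [← hd, Finsupp.add_apply]
  have hd1 : dd 1 = p.1 1 + p.2 1 := by rw [← hd, Finsupp.add_apply]
  rw [BT.lo_node, BT.ro_node, card_NAT_node, smul_mul_smul_comm,
    ← Nat.cast_smul_eq_nsmul ℚ, ← Nat.cast_smul_eq_nsmul ℚ, smul_smul, smul_smul]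
  congr 1
  rw [hL1, hL2, hR1, hR2, hd0, hd1]
  push_cast
  have hq := q_arith (p.1 0) (p.2 0) (p.1 1) (p.2 1)
  linear_combination ((Nat.card (NAT x.1) : ℚ) * (Nat.card (NAT x.2) : ℚ)) * hq
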